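/- arXiv:1606.00622 — 3 statements merged into one kernel-verified Lean document; each statement's English description precedes it below -/
import Mathlib

section
/- Let π_1, π_2 be probability vectors on {1,...,K}, Q a K×K row-stochastic matrix, and f_1,...,f_K ∈ L²(Y,μ) with ‖f_k‖_2 ≤ C_2 for all k. Then ‖g^{π_1,Q,f} − g^{π_2,Q,f}‖_2² ≤ K C_2^{2L} ‖π_1 − π_2‖_2², where g^{π,Q,f}(y_1,...,y_L) = Σ_{k_1,...,k_L} π(k_1) ∏_{i=2}^L Q(k_{i−1},k_i) ∏_{i=1}^L f_{k_i}(y_i). -/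
open MeasureTheory
lemma snoc_mk_lt {K L : ℕ} (k' : Fin L → Fin K) (j : Fin K) (m : ℕ) (h1 : m < L)
    (h2 : m < L + 1) : Fin.snoc (α := fun _ => Fin K) k' j (⟨m, h2⟩ : Fin (L + 1)) = k' ⟨m, h1⟩ := by
  have : (⟨m, h2⟩ : Fin (L + 1)) = Fin.castSucc ⟨m, h1⟩ := by ext; simp
  rw [this, Fin.snoc_castSucc]

lemma pathSum {K : ℕ} (p : Fin K → ℝ) (hp : ∑ k, p k = 1)
    (Q : Matrix (Fin K) (Fin K) ℝ) (hQ : ∀ i, ∑ j, Q i j = 1) (L : ℕ) :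
    ∑ k : Fin L → Fin K, (∏ i : Fin L, if (i : ℕ) = 0 then p (k i)
      else Q (k ⟨i.1 - 1, lt_of_le_of_lt (Nat.sub_le _ _) i.isLt⟩) (k i)) = 1 := by
  induction L with
  | zero => simp
  | succ L ih =>
    rw [← (Fin.snocEquiv (fun _ : Fin (L + 1) => Fin K)).sum_comp]
    rw [Fintype.sum_prod_type, Finset.sum_comm]
    have key : ∀ (k' : Fin L → Fin K) (j : Fin K),
        (∏ i : Fin (L + 1), if (i : ℕ) = 0 then p (Fin.snoc (α := fun _ => Fin K) k' j i)
          else Q (Fin.snoc (α := fun _ => Fin K) k' j ⟨i.1 - 1, lt_of_le_of_lt (Nat.sub_le _ _) i.isLt⟩)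
            (Fin.snoc (α := fun _ => Fin K) k' j i))
        = (∏ i : Fin L, if (i : ℕ) = 0 then p (k' i)
            else Q (k' ⟨i.1 - 1, lt_of_le_of_lt (Nat.sub_le _ _) i.isLt⟩) (k' i))
          * (if hL0 : L = 0 then p j else Q (k' ⟨L - 1, by omega⟩) j) := by
      intro k' j
      rw [Fin.prod_univ_castSucc]
      congr 1
      · refine Finset.prod_congr rfl fun i _ => ?_
        by_cases hi : (i : ℕ) = 0
        · have hi' : ((Fin.castSucc i : Fin (L + 1)) : ℕ) = 0 := by simpa using hi
          rw [if_pos hi', if_pos hi, Fin.snoc_castSucc]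
        · have hi' : ¬((Fin.castSucc i : Fin (L + 1)) : ℕ) = 0 := by simpa using hi
          rw [if_neg hi', if_neg hi, Fin.snoc_castSucc]
          congr 1
          have h1 : ((Fin.castSucc i : Fin (L + 1)) : ℕ) - 1 < L := by
            have : (i : ℕ) < L := i.isLt
            simp only [Fin.coe_castSucc]
            omega
          rw [snoc_mk_lt k' j _ h1]
          congr 1
      · by_cases hL0 : L = 0
        · subst hL0
          rw [dif_pos rfl]
          have h0 : ((Fin.last 0 : Fin 1) : ℕ) = 0 := rfl
          rw [if_pos h0, Fin.snoc_last]
        · rw [dif_neg hL0]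
          have hlast : ((Fin.last L : Fin (L + 1)) : ℕ) = L := rfl
          rw [if_neg (by simp [hlast, hL0]), Fin.snoc_last]
          congr 1
          have h1 : ((Fin.last L : Fin (L + 1)) : ℕ) - 1 < L := by
            simp only [hlast]; omega
          rw [snoc_mk_lt k' j _ h1]
          congr 1
    have hsum1 : ∀ k' : Fin L → Fin K,
        (∑ j, (if hL0 : L = 0 then p j else Q (k' ⟨L - 1, by omega⟩) j)) = 1 := by
      intro k'
      by_cases hL0 : L = 0
      · simp only [dif_pos hL0]; exact hp
      · simp only [dif_neg hL0]; exact hQ _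
    calc ∑ k' : Fin L → Fin K, ∑ j : Fin K, ∏ i : Fin (L + 1),
            (if (i : ℕ) = 0 then p ((Fin.snocEquiv (fun _ => Fin K)) (j, k') i)
              else Q ((Fin.snocEquiv (fun _ => Fin K)) (j, k')
                  ⟨i.1 - 1, lt_of_le_of_lt (Nat.sub_le _ _) i.isLt⟩)
                ((Fin.snocEquiv (fun _ => Fin K)) (j, k') i))
        = ∑ k' : Fin L → Fin K, (∏ i : Fin L, if (i : ℕ) = 0 then p (k' i)
            else Q (k' ⟨i.1 - 1, lt_of_le_of_lt (Nat.sub_le _ _) i.isLt⟩) (k' i))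
          * ∑ j, (if hL0 : L = 0 then p j else Q (k' ⟨L - 1, by omega⟩) j) := by
          refine Finset.sum_congr rfl fun k' _ => ?_
          rw [Finset.mul_sum]
          refine Finset.sum_congr rfl fun j _ => ?_
          simpa [Fin.snocEquiv] using key k' j
      _ = 1 := by
          simp only [hsum1, mul_one]
          exact ih

/-- The density of the first `L` observations of a HMM with initial distribution `π`,
transition matrix `Q` and emission densities `f`:
`g^{π,Q,f}(y_1,…,y_L) = ∑_{k_1,…,k_L} π(k_1) ∏_{i=2}^L Q(k_{i-1},k_i) ∏_{i=1}^L f_{k_i}(y_i)`. -/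
noncomputable def hmmG {Y : Type*} {K L : ℕ} (π : Fin K → ℝ) (Q : Matrix (Fin K) (Fin K) ℝ)
    (f : Fin K → Y → ℝ) : (Fin L → Y) → ℝ :=
  fun y => ∑ k : Fin L → Fin K,
    (∏ i : Fin L, if (i : ℕ) = 0 then π (k i)
      else Q (k ⟨i.1 - 1, lt_of_le_of_lt (Nat.sub_le _ _) i.isLt⟩) (k i)) *
    ∏ i : Fin L, f (k i) (y i)

/-- `π` is a probability vector. -/
def IsProbVec {K : ℕ} (π : Fin K → ℝ) : Prop := (∀ k, 0 ≤ π k) ∧ ∑ k, π k = 1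

/-- `Q` is a row-stochastic matrix. -/
def IsStochastic {K : ℕ} (Q : Matrix (Fin K) (Fin K) ℝ) : Prop :=
  (∀ i j, 0 ≤ Q i j) ∧ ∀ i, ∑ j, Q i j = 1

/-- `‖g^{π_1,Q,f} − g^{π_2,Q,f}‖_2² ≤ K C_2^{2L} ‖π_1 − π_2‖_2²` when `‖f_k‖_2 ≤ C_2`. -/
theorem hmmG_diff_initial_le {Y : Type*} [MeasurableSpace Y] (μ : Measure Y) [SigmaFinite μ]
    (K L : ℕ) (hK : 1 ≤ K) (hL : 1 ≤ L)
    (π₁ π₂ : Fin K → ℝ) (hπ₁ : IsProbVec π₁) (hπ₂ : IsProbVec π₂)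
    (Q : Matrix (Fin K) (Fin K) ℝ) (hQ : IsStochastic Q)
    (f : Fin K → Y → ℝ) (hfL2 : ∀ k, MemLp (f k) 2 μ)
    (C2 : ℝ) (hC : 1 ≤ C2) (hf : ∀ k, ∫ y, (f k y) ^ 2 ∂μ ≤ C2 ^ 2) :
    ∫ y, (hmmG π₁ Q f y - hmmG π₂ Q f y) ^ 2 ∂(Measure.pi fun _ : Fin L => μ)
      ≤ (K : ℝ) * C2 ^ (2 * L) * ∑ k, (π₁ k - π₂ k) ^ 2 := by
  letI : MeasureSpace Y := ⟨μ⟩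
  haveI : SigmaFinite (volume : Measure Y) := ‹SigmaFinite μ›
  have hvol : (Measure.pi fun _ : Fin L => μ) = (volume : Measure (Fin L → Y)) :=
    volume_pi.symm
  rw [hvol]
  set W : (Fin L → Fin K) → ℝ := fun k => ∏ i : Fin L,
    (if (i : ℕ) = 0 then (1 : ℝ)
      else Q (k ⟨i.1 - 1, lt_of_le_of_lt (Nat.sub_le _ _) i.isLt⟩) (k i)) with hW
  set F : (Fin L → Fin K) → (Fin L → Y) → ℝ := fun k y => ∏ i, f (k i) (y i) with hF
  set i0 : Fin L := ⟨0, hL⟩ with hi0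
  -- splitting the weight
  have hsplit : ∀ (p : Fin K → ℝ) (k : Fin L → Fin K),
      (∏ i : Fin L, if (i : ℕ) = 0 then p (k i)
        else Q (k ⟨i.1 - 1, lt_of_le_of_lt (Nat.sub_le _ _) i.isLt⟩) (k i))
      = p (k i0) * W k := by
    intro p k
    have hterm : ∀ i : Fin L, (if (i : ℕ) = 0 then p (k i)
        else Q (k ⟨i.1 - 1, lt_of_le_of_lt (Nat.sub_le _ _) i.isLt⟩) (k i))
      = (if (i : ℕ) = 0 then p (k i) else 1) *
        (if (i : ℕ) = 0 then (1 : ℝ)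
          else Q (k ⟨i.1 - 1, lt_of_le_of_lt (Nat.sub_le _ _) i.isLt⟩) (k i)) := by
      intro i; by_cases h : (i : ℕ) = 0 <;> simp [h]
    rw [Finset.prod_congr rfl (fun i _ => hterm i), Finset.prod_mul_distrib]
    congr 1
    rw [Finset.prod_eq_single i0]
    · simp [hi0]
    · intro b _ hb
      exact if_neg (fun h => hb (Fin.ext h))
    · simp
  have hWnn : ∀ k, 0 ≤ W k := by
    intro k
    refine Finset.prod_nonneg fun i _ => ?_
    split
    · exact zero_le_one
    · exact hQ.1 _ _
  have hWsum : ∀ j : Fin K, ∑ k ∈ Finset.univ.filter (fun k => k i0 = j), W k = 1 := by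
    intro j
    have hps : ∑ m, (Pi.single j 1 : Fin K → ℝ) m = 1 := by simp
    have h1 := pathSum (Pi.single j 1) hps Q hQ.2 L
    rw [Finset.sum_congr rfl (fun k _ => hsplit (Pi.single j 1) k)] at h1
    rw [Finset.sum_filter, ← h1]
    refine Finset.sum_congr rfl fun k _ => ?_
    by_cases h : k i0 = j <;> simp [h, Pi.single_apply]
  have hFsq : ∀ k (y : Fin L → Y), (F k y) ^ 2 = ∏ i, (f (k i) (y i)) ^ 2 := by
    intro k y
    rw [hF, ← Finset.prod_pow]
  have hF2int : ∀ k, Integrable (fun y : Fin L → Y => (F k y) ^ 2) volume := by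
    intro k
    have h := MeasureTheory.Integrable.fintype_prod
      (f := fun (i : Fin L) (x : Y) => (f (k i) x) ^ 2) (fun i => (hfL2 (k i)).integrable_sq)
    have he : (fun y : Fin L → Y => (F k y) ^ 2)
        = fun y : Fin L → Y => ∏ i, (f (k i) (y i)) ^ 2 := funext (hFsq k)
    rw [he]; exact h
  have hF2val : ∀ k, (∫ y : Fin L → Y, (F k y) ^ 2) ≤ C2 ^ (2 * L) := by
    intro k
    have he : (∫ y : Fin L → Y, (F k y) ^ 2)
        = ∏ i : Fin L, ∫ x : Y, (f (k i) x) ^ 2 := by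
      simp only [hFsq]
      exact MeasureTheory.integral_fintype_prod_eq_prod (ι := Fin L) (μ := fun _ => volume)
        (fun i (x : Y) => (f (k i) x) ^ 2)
    rw [he]
    calc ∏ i : Fin L, ∫ x : Y, (f (k i) x) ^ 2
        ≤ ∏ _i : Fin L, C2 ^ 2 := by
          refine Finset.prod_le_prod (fun i _ => integral_nonneg fun x => sq_nonneg _)
            (fun i _ => hf (k i))
      _ = C2 ^ (2 * L) := by
          rw [Finset.prod_const, pow_mul]
          simp
  have hfib : ∀ (j : Fin K) (y : Fin L → Y),
      (∑ k ∈ Finset.univ.filter (fun k => k i0 = j), W k * F k y) ^ 2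
        ≤ ∑ k ∈ Finset.univ.filter (fun k => k i0 = j), W k * (F k y) ^ 2 := by
    intro j y
    calc (∑ k ∈ Finset.univ.filter (fun k => k i0 = j), W k * F k y) ^ 2
        = (∑ k ∈ Finset.univ.filter (fun k => k i0 = j),
            Real.sqrt (W k) * (Real.sqrt (W k) * F k y)) ^ 2 := by
          refine congrArg (· ^ 2) (Finset.sum_congr rfl fun k _ => ?_)
          rw [← mul_assoc, Real.mul_self_sqrt (hWnn k)]
      _ ≤ (∑ k ∈ Finset.univ.filter (fun k => k i0 = j), Real.sqrt (W k) ^ 2) *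
          ∑ k ∈ Finset.univ.filter (fun k => k i0 = j), (Real.sqrt (W k) * F k y) ^ 2 :=
          Finset.sum_mul_sq_le_sq_mul_sq _ _ _
      _ = (∑ k ∈ Finset.univ.filter (fun k => k i0 = j), W k) *
          ∑ k ∈ Finset.univ.filter (fun k => k i0 = j), W k * (F k y) ^ 2 := by
          congr 1
          · exact Finset.sum_congr rfl fun k _ => Real.sq_sqrt (hWnn k)
          · refine Finset.sum_congr rfl fun k _ => ?_
            rw [mul_pow, Real.sq_sqrt (hWnn k)]
      _ = _ := by rw [hWsum j, one_mul]
  have hdiff : ∀ y : Fin L → Y, hmmG π₁ Q f y - hmmG π₂ Q f y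
      = ∑ j : Fin K, (π₁ j - π₂ j) *
          ∑ k ∈ Finset.univ.filter (fun k => k i0 = j), W k * F k y := by
    intro y
    unfold hmmG
    rw [← Finset.sum_sub_distrib]
    calc ∑ k : Fin L → Fin K,
          ((∏ i : Fin L, if (i : ℕ) = 0 then π₁ (k i)
              else Q (k ⟨i.1 - 1, lt_of_le_of_lt (Nat.sub_le _ _) i.isLt⟩) (k i)) *
              ∏ i : Fin L, f (k i) (y i)
            - (∏ i : Fin L, if (i : ℕ) = 0 then π₂ (k i)
              else Q (k ⟨i.1 - 1, lt_of_le_of_lt (Nat.sub_le _ _) i.isLt⟩) (k i)) *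
              ∏ i : Fin L, f (k i) (y i))
        = ∑ k : Fin L → Fin K, (π₁ (k i0) - π₂ (k i0)) * (W k * F k y) := by
          refine Finset.sum_congr rfl fun k _ => ?_
          rw [hsplit π₁ k, hsplit π₂ k]
          show _ = _ * (_ * ∏ i : Fin L, f (k i) (y i))
          ring
      _ = ∑ j : Fin K, ∑ k ∈ Finset.univ.filter (fun k => k i0 = j),
            (π₁ (k i0) - π₂ (k i0)) * (W k * F k y) :=
          (Finset.sum_fiberwise Finset.univ (fun k => k i0)
            (fun k => (π₁ (k i0) - π₂ (k i0)) * (W k * F k y))).symm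
      _ = _ := by
          refine Finset.sum_congr rfl fun j _ => ?_
          rw [Finset.mul_sum]
          refine Finset.sum_congr rfl fun k hk => ?_
          rw [(Finset.mem_filter.1 hk).2]
  have hpt : ∀ y : Fin L → Y, (hmmG π₁ Q f y - hmmG π₂ Q f y) ^ 2
      ≤ (∑ j, (π₁ j - π₂ j) ^ 2) *
        ∑ j : Fin K, ∑ k ∈ Finset.univ.filter (fun k => k i0 = j), W k * (F k y) ^ 2 := by
    intro y
    rw [hdiff y]
    calc (∑ j : Fin K, (π₁ j - π₂ j) *
            ∑ k ∈ Finset.univ.filter (fun k => k i0 = j), W k * F k y) ^ 2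
        ≤ (∑ j, (π₁ j - π₂ j) ^ 2) *
          ∑ j : Fin K, (∑ k ∈ Finset.univ.filter (fun k => k i0 = j), W k * F k y) ^ 2 :=
          Finset.sum_mul_sq_le_sq_mul_sq _ _ _
      _ ≤ _ := by
          refine mul_le_mul_of_nonneg_left (Finset.sum_le_sum fun j _ => hfib j y)
            (Finset.sum_nonneg fun j _ => sq_nonneg _)
  have hBint : ∀ j : Fin K, Integrable
      (fun y : Fin L → Y => ∑ k ∈ Finset.univ.filter (fun k => k i0 = j), W k * (F k y) ^ 2)
      volume := fun j =>
    integrable_finset_sum _ (fun k _ => (hF2int k).const_mul (W k))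
  have hBval : ∀ j : Fin K,
      (∫ y : Fin L → Y, ∑ k ∈ Finset.univ.filter (fun k => k i0 = j), W k * (F k y) ^ 2)
        ≤ C2 ^ (2 * L) := by
    intro j
    rw [integral_finset_sum _ (fun k _ => (hF2int k).const_mul (W k))]
    calc ∑ k ∈ Finset.univ.filter (fun k => k i0 = j), ∫ y : Fin L → Y, W k * (F k y) ^ 2
        = ∑ k ∈ Finset.univ.filter (fun k => k i0 = j), W k * ∫ y : Fin L → Y, (F k y) ^ 2 :=
          Finset.sum_congr rfl fun k _ => integral_const_mul _ _
      _ ≤ ∑ k ∈ Finset.univ.filter (fun k => k i0 = j), W k * C2 ^ (2 * L) :=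
          Finset.sum_le_sum fun k _ => mul_le_mul_of_nonneg_left (hF2val k) (hWnn k)
      _ = (∑ k ∈ Finset.univ.filter (fun k => k i0 = j), W k) * C2 ^ (2 * L) := by
          rw [Finset.sum_mul]
      _ = C2 ^ (2 * L) := by rw [hWsum j, one_mul]
  have hGint : Integrable (fun y : Fin L → Y => (∑ j, (π₁ j - π₂ j) ^ 2) *
      ∑ j : Fin K, ∑ k ∈ Finset.univ.filter (fun k => k i0 = j), W k * (F k y) ^ 2) volume :=
    (integrable_finset_sum _ (fun j _ => hBint j)).const_mul _
  calc ∫ y : Fin L → Y, (hmmG π₁ Q f y - hmmG π₂ Q f y) ^ 2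
      ≤ ∫ y : Fin L → Y, (∑ j, (π₁ j - π₂ j) ^ 2) *
          ∑ j : Fin K, ∑ k ∈ Finset.univ.filter (fun k => k i0 = j), W k * (F k y) ^ 2 :=
        integral_mono_of_nonneg (Filter.Eventually.of_forall fun y => sq_nonneg _)
          hGint (Filter.Eventually.of_forall hpt)
    _ = (∑ j, (π₁ j - π₂ j) ^ 2) * ∑ j : Fin K,
          ∫ y : Fin L → Y, ∑ k ∈ Finset.univ.filter (fun k => k i0 = j), W k * (F k y) ^ 2 := by
        rw [integral_const_mul, integral_finset_sum _ (fun j _ => hBint j)]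
    _ ≤ (∑ j, (π₁ j - π₂ j) ^ 2) * ((K : ℝ) * C2 ^ (2 * L)) := by
        refine mul_le_mul_of_nonneg_left ?_ (Finset.sum_nonneg fun j _ => sq_nonneg _)
        calc (∑ j : Fin K, ∫ y : Fin L → Y,
              ∑ k ∈ Finset.univ.filter (fun k => k i0 = j), W k * (F k y) ^ 2)
            ≤ ∑ _j : Fin K, C2 ^ (2 * L) := Finset.sum_le_sum fun j _ => hBval j
          _ = (K : ℝ) * C2 ^ (2 * L) := by
              rw [Finset.sum_const]
              simp [nsmul_eq_mul]
    _ = (K : ℝ) * C2 ^ (2 * L) * ∑ k, (π₁ k - π₂ k) ^ 2 := by ring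
end

section
/- For every ε ∈ (0,2), K ∈ ℕ* and L ∈ ℕ*, the set U of arrays (π(k_1) ∏_{i=2}^L Q(k_{i−1},k_i))_{k∈{1,...,K}^L} with π ranging over probability vectors on {1,...,K} and Q over K×K row-stochastic matrices admits a covering by brackets of ℓ²-size at most ε · L · K^{L/2} (brackets [A,B] with A_k ≤ x_k ≤ B_k entrywise and Σ_k(B_k − A_k)² ≤ ε²L²K^L) whose cardinality is at most (2/ε)^{K²−1}, and with all lower bounds A_k in [0,1]. -/
open MeasureTheory

/-- The array `(π(k_1) ∏_{i=2}^L Q(k_{i−1},k_i))_{k ∈ {1,…,K}^L}` associated with an initial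
distribution `π` and a transition matrix `Q`. -/
noncomputable def hmmWeight {K L : ℕ} (π : Fin K → ℝ) (Q : Matrix (Fin K) (Fin K) ℝ)
    (k : Fin L → Fin K) : ℝ :=
  ∏ i : Fin L, if (i : ℕ) = 0 then π (k i)
    else Q (k ⟨i.1 - 1, lt_of_le_of_lt (Nat.sub_le _ _) i.isLt⟩) (k i)

open Finset in
lemma prob_le_one {K : ℕ} {π : Fin K → ℝ} (h0 : ∀ k, 0 ≤ π k) (h1 : ∑ k, π k = 1)
    (a : Fin K) : π a ≤ 1 := by
  rw [← h1]
  exact Finset.single_le_sum (fun i _ => h0 i) (mem_univ a)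

open Finset in
lemma telescope {ι : Type*} (s : Finset ι) (f g : ι → ℝ)
    (h0 : ∀ i ∈ s, 0 ≤ f i) (hfg : ∀ i ∈ s, f i ≤ g i) (hg1 : ∀ i ∈ s, g i ≤ 1) :
    ∏ i ∈ s, g i - ∏ i ∈ s, f i ≤ ∑ i ∈ s, (g i - f i) := by
  classical
  induction s using Finset.cons_induction with
  | empty => simp
  | cons a s ha ih =>
    have h0' : ∀ i ∈ s, 0 ≤ f i := fun i hi => h0 i (mem_cons_of_mem hi)
    have hfg' : ∀ i ∈ s, f i ≤ g i := fun i hi => hfg i (mem_cons_of_mem hi)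
    have hg1' : ∀ i ∈ s, g i ≤ 1 := fun i hi => hg1 i (mem_cons_of_mem hi)
    have ihs := ih h0' hfg' hg1'
    rw [Finset.prod_cons, Finset.prod_cons, Finset.sum_cons]
    have hga : g a ≤ 1 := hg1 a (mem_cons_self a s)
    have hfa : 0 ≤ f a := h0 a (mem_cons_self a s)
    have hfga : f a ≤ g a := hfg a (mem_cons_self a s)
    have hprod : ∏ i ∈ s, f i ≤ ∏ i ∈ s, g i := Finset.prod_le_prod h0' hfg'
    have hfs1 : ∏ i ∈ s, f i ≤ 1 :=
      Finset.prod_le_one h0' (fun i hi => le_trans (hfg' i hi) (hg1' i hi))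
    have hfs0 : 0 ≤ ∏ i ∈ s, f i := Finset.prod_nonneg h0'
    have hga0 : 0 ≤ g a := le_trans hfa hfga
    nlinarith [mul_le_mul_of_nonneg_left ihs hga0]

open Finset in
lemma bracket_main {K L : ℕ} (hL : 1 ≤ L) (ε : ℝ) (hε : 0 < ε)
    {ι : Type} [DecidableEq ι] (I : Finset ι)
    (lπ uπ : ι → Fin K → ℝ) (lQ uQ : ι → Fin K → Fin K → ℝ)
    (hπ : ∀ c ∈ I, ∀ a, 0 ≤ lπ c a ∧ lπ c a ≤ uπ c a ∧ uπ c a ≤ 1 ∧ uπ c a - lπ c a ≤ ε)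
    (hQ : ∀ c ∈ I, ∀ a b, 0 ≤ lQ c a b ∧ lQ c a b ≤ uQ c a b ∧ uQ c a b ≤ 1 ∧
      (2 ≤ L → uQ c a b - lQ c a b ≤ ε))
    (hcov : ∀ (π : Fin K → ℝ) (Q : Matrix (Fin K) (Fin K) ℝ), IsProbVec π → IsStochastic Q →
      ∃ c ∈ I, (∀ a, lπ c a ≤ π a ∧ π a ≤ uπ c a) ∧
        (∀ a b, lQ c a b ≤ Q a b ∧ Q a b ≤ uQ c a b)) :
    ∃ s : Finset (((Fin L → Fin K) → ℝ) × ((Fin L → Fin K) → ℝ)),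
      s.card ≤ I.card ∧
      (∀ p ∈ s,
        (∀ k, 0 ≤ p.1 k ∧ p.1 k ≤ 1) ∧
        ∑ k, (p.2 k - p.1 k) ^ 2 ≤ ε ^ 2 * (L : ℝ) ^ 2 * (K : ℝ) ^ L) ∧
      ∀ (π : Fin K → ℝ) (Q : Matrix (Fin K) (Fin K) ℝ), IsProbVec π → IsStochastic Q →
        ∃ p ∈ s, ∀ k, p.1 k ≤ hmmWeight π Q k ∧ hmmWeight π Q k ≤ p.2 k := by
  classical
  set flow : ι → (Fin L → Fin K) → Fin L → ℝ := fun c k i =>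
    if (i : ℕ) = 0 then lπ c (k i)
      else lQ c (k ⟨i.1 - 1, lt_of_le_of_lt (Nat.sub_le _ _) i.isLt⟩) (k i) with hflow
  set fup : ι → (Fin L → Fin K) → Fin L → ℝ := fun c k i =>
    if (i : ℕ) = 0 then uπ c (k i)
      else uQ c (k ⟨i.1 - 1, lt_of_le_of_lt (Nat.sub_le _ _) i.isLt⟩) (k i) with hfup
  have hflow01 : ∀ c ∈ I, ∀ k i, 0 ≤ flow c k i ∧ flow c k i ≤ fup c k i ∧ fup c k i ≤ 1 ∧
      fup c k i - flow c k i ≤ ε := by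
    intro c hc k i
    by_cases h : (i : ℕ) = 0
    · simp only [hflow, hfup, if_pos h]
      exact ⟨(hπ c hc _).1, (hπ c hc _).2.1, (hπ c hc _).2.2.1, (hπ c hc _).2.2.2⟩
    · have hL2 : 2 ≤ L := by have := i.isLt; omega
      simp only [hflow, hfup, if_neg h]
      exact ⟨(hQ c hc _ _).1, (hQ c hc _ _).2.1, (hQ c hc _ _).2.2.1,
        (hQ c hc _ _).2.2.2 hL2⟩
  refine ⟨I.image (fun c => (fun k => ∏ i, flow c k i, fun k => ∏ i, fup c k i)),
    Finset.card_image_le, ?_, ?_⟩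
  · rintro p hp
    rcases Finset.mem_image.1 hp with ⟨c, hc, rfl⟩
    dsimp only
    refine ⟨fun k => ⟨Finset.prod_nonneg (fun i _ => (hflow01 c hc k i).1),
      Finset.prod_le_one (fun i _ => (hflow01 c hc k i).1)
        (fun i _ => le_trans (hflow01 c hc k i).2.1 (hflow01 c hc k i).2.2.1)⟩, ?_⟩
    have hbd : ∀ k : Fin L → Fin K,
        (∏ i, fup c k i - ∏ i, flow c k i) ^ 2 ≤ (ε * L) ^ 2 := by
      intro k
      have h1 : ∏ i, fup c k i - ∏ i, flow c k i ≤ ∑ i : Fin L, (fup c k i - flow c k i) :=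
        telescope _ _ _ (fun i _ => (hflow01 c hc k i).1) (fun i _ => (hflow01 c hc k i).2.1)
          (fun i _ => (hflow01 c hc k i).2.2.1)
      have h2 : ∑ i : Fin L, (fup c k i - flow c k i) ≤ ∑ _i : Fin L, ε :=
        Finset.sum_le_sum (fun i _ => (hflow01 c hc k i).2.2.2)
      have h3 : ∑ _i : Fin L, ε = (L : ℝ) * ε := by
        simp [Finset.sum_const, nsmul_eq_mul]
      have h4 : 0 ≤ ∏ i, fup c k i - ∏ i, flow c k i := by
        have := Finset.prod_le_prod (s := Finset.univ) (f := flow c k) (g := fup c k)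
          (fun i _ => (hflow01 c hc k i).1) (fun i _ => (hflow01 c hc k i).2.1)
        linarith
      have h5 : ∏ i, fup c k i - ∏ i, flow c k i ≤ ε * L := by
        rw [h3] at h2; linarith
      have hεL : (0:ℝ) ≤ ε * L := by positivity
      nlinarith
    calc ∑ k, ((fun k => ∏ i, fup c k i) k - (fun k => ∏ i, flow c k i) k) ^ 2
        ≤ ∑ _k : Fin L → Fin K, (ε * L) ^ 2 := Finset.sum_le_sum (fun k _ => hbd k)
      _ = (Fintype.card (Fin L → Fin K) : ℝ) * (ε * L) ^ 2 := by
          simp [Finset.sum_const, nsmul_eq_mul, Finset.card_univ]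
      _ = ε ^ 2 * (L : ℝ) ^ 2 * (K : ℝ) ^ L := by
          rw [Fintype.card_fun]
          push_cast [Fintype.card_fin]
          ring
  · intro π Q hπv hQv
    rcases hcov π Q hπv hQv with ⟨c, hc, hcπ, hcQ⟩
    refine ⟨_, Finset.mem_image_of_mem _ hc, fun k => ?_⟩
    dsimp only
    have hw : hmmWeight π Q k = ∏ i : Fin L,
        (if (i : ℕ) = 0 then π (k i)
          else Q (k ⟨i.1 - 1, lt_of_le_of_lt (Nat.sub_le _ _) i.isLt⟩) (k i)) := rfl
    constructor
    · rw [hw]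
      apply Finset.prod_le_prod (fun i _ => (hflow01 c hc k i).1)
      intro i _
      by_cases h : (i : ℕ) = 0
      · simp only [hflow, if_pos h]; exact (hcπ _).1
      · simp only [hflow, if_neg h]; exact (hcQ _ _).1
    · rw [hw]
      apply Finset.prod_le_prod
      · intro i _
        by_cases h : (i : ℕ) = 0
        · simp only [if_pos h]; exact le_trans (hπ c hc _).1 (hcπ _).1
        · simp only [if_neg h]; exact le_trans (hQ c hc _ _).1 (hcQ _ _).1
      · intro i _
        by_cases h : (i : ℕ) = 0
        · simp only [hfup, if_pos h]; exact (hcπ _).2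
        · simp only [hfup, if_neg h]; exact (hcQ _ _).2

lemma card_mono_le (m q : ℕ) :
    ((Finset.univ : Finset (Fin m → Fin (q+1))).filter
      (fun c => ∀ i j : Fin m, i ≤ j → c i ≤ c j)).card ≤ (q + m).choose m := by
  classical
  have : ((Finset.range (q+m)).powersetCard m).card = (q+m).choose m := by
    simp [Finset.card_powersetCard]
  rw [← this]
  apply Finset.card_le_card_of_injOn
    (fun c => Finset.image (fun i : Fin m => (c i : ℕ) + (i : ℕ)) Finset.univ)
  · intro c hc
    rw [Finset.mem_coe, Finset.mem_filter] at hc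
    have hsm : StrictMono (fun i : Fin m => (c i : ℕ) + (i : ℕ)) := by
      intro i j hij
      have h1 : ((c i : Fin (q+1)) : ℕ) ≤ ((c j : Fin (q+1)) : ℕ) := hc.2 i j (le_of_lt hij)
      have h2 : (i : ℕ) < (j : ℕ) := hij
      show (c i : ℕ) + (i : ℕ) < (c j : ℕ) + (j : ℕ)
      omega
    rw [Finset.mem_coe, Finset.mem_powersetCard]
    constructor
    · intro x hx
      rw [Finset.mem_image] at hx
      rcases hx with ⟨i, _, rfl⟩
      rw [Finset.mem_range]
      have h1 : (c i : ℕ) ≤ q := Nat.lt_succ_iff.1 (c i).isLt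
      have h2 : (i : ℕ) < m := i.isLt
      omega
    · rw [Finset.card_image_of_injective _ hsm.injective]
      simp
  · intro c hc c' hc' heq
    rw [Finset.mem_coe, Finset.mem_filter] at hc hc'
    have hsm : StrictMono (fun i : Fin m => (c i : ℕ) + (i : ℕ)) := by
      intro i j hij
      have h1 : ((c i : Fin (q+1)) : ℕ) ≤ ((c j : Fin (q+1)) : ℕ) := hc.2 i j (le_of_lt hij)
      have h2 : (i : ℕ) < (j : ℕ) := hij
      show (c i : ℕ) + (i : ℕ) < (c j : ℕ) + (j : ℕ)
      omega
    have hsm' : StrictMono (fun i : Fin m => (c' i : ℕ) + (i : ℕ)) := by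
      intro i j hij
      have h1 : ((c' i : Fin (q+1)) : ℕ) ≤ ((c' j : Fin (q+1)) : ℕ) := hc'.2 i j (le_of_lt hij)
      have h2 : (i : ℕ) < (j : ℕ) := hij
      show (c' i : ℕ) + (i : ℕ) < (c' j : ℕ) + (j : ℕ)
      omega
    set s : Finset ℕ := Finset.image (fun i : Fin m => (c i : ℕ) + (i : ℕ)) Finset.univ with hs
    have hcard : s.card = m := by
      rw [hs, Finset.card_image_of_injective _ hsm.injective]; simp
    have hmem : ∀ x, (fun i : Fin m => (c i : ℕ) + (i : ℕ)) x ∈ s := by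
      intro x; rw [hs]; exact Finset.mem_image_of_mem _ (Finset.mem_univ x)
    have heq' : Finset.image (fun i : Fin m => (c i : ℕ) + (i : ℕ)) Finset.univ
        = Finset.image (fun i : Fin m => (c' i : ℕ) + (i : ℕ)) Finset.univ := heq
    have hmem' : ∀ x, (fun i : Fin m => (c' i : ℕ) + (i : ℕ)) x ∈ s := by
      intro x
      rw [hs, heq']
      exact Finset.mem_image_of_mem _ (Finset.mem_univ x)
    have e1 := Finset.orderEmbOfFin_unique hcard hmem hsm
    have e2 := Finset.orderEmbOfFin_unique hcard hmem' hsm'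
    funext i
    have : (c i : ℕ) + (i : ℕ) = (c' i : ℕ) + (i : ℕ) := by
      rw [show ((c i : ℕ) + (i : ℕ)) = (fun i : Fin m => (c i : ℕ) + (i : ℕ)) i from rfl, e1,
        show ((c' i : ℕ) + (i : ℕ)) = (fun i : Fin m => (c' i : ℕ) + (i : ℕ)) i from rfl, e2]
    have : (c i : ℕ) = (c' i : ℕ) := by omega
    exact Fin.ext this

lemma descFac_le (q : ℕ) (hq : 4 ≤ q) : ∀ m, 2 ≤ m → (q + m).descFactorial m ≤ m.factorial * q ^ m := by
  intro m
  induction m with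
  | zero => omega
  | succ m ih =>
    intro _
    by_cases hm : 2 ≤ m
    · have h1 := ih hm
      have hrec : (q + (m+1)).descFactorial (m+1) = (q + m + 1) * (q + m).descFactorial m := by
        rw [show q + (m+1) = (q+m)+1 by omega]
        exact Nat.succ_descFactorial_succ (q+m) m
      rw [hrec]
      calc (q + m + 1) * (q + m).descFactorial m ≤ (q + m + 1) * (m.factorial * q ^ m) :=
            Nat.mul_le_mul_left _ h1
        _ ≤ ((m+1) * q) * (m.factorial * q ^ m) := by
            apply Nat.mul_le_mul_right
            nlinarith
        _ = (m+1).factorial * q ^ (m+1) := by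
            rw [Nat.factorial_succ, pow_succ]; ring
    · have hm2 : m = 1 := by omega
      subst hm2
      have hd : (q + 2).descFactorial 2 = (q + 1) * (q + 2) := by
        rw [Nat.descFactorial_succ, Nat.descFactorial_one]
        have : q + 2 - 1 = q + 1 := by omega
        rw [this]
      rw [hd]
      have hf : (2:ℕ).factorial = 2 := rfl
      rw [hf, pow_two]
      nlinarith

lemma choose_le_pow_spec (q m : ℕ) (hq : 4 ≤ q) (hm : 2 ≤ m) : (q + m).choose m ≤ q ^ m := by
  have h1 : m.factorial * (q+m).choose m = (q+m).descFactorial m :=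
    (Nat.descFactorial_eq_factorial_mul_choose _ _).symm
  have h2 := descFac_le q hq m hm
  rw [← h1] at h2
  exact Nat.le_of_mul_le_mul_left h2 m.factorial_pos

noncomputable def chat (δ : ℝ) {m : ℕ} (c : Fin m → ℕ) : ℕ → ℝ :=
  fun i => if i = 0 then 0 else if h : i - 1 < m then (c ⟨i - 1, h⟩ : ℝ) * δ else 1

lemma chat_mem {δ : ℝ} (hδ : 0 < δ) {m : ℕ} {c : Fin m → ℕ} {n' : ℕ}
    (hc : ∀ i, c i ≤ n') (hn : (n' : ℝ) * δ ≤ 1) (i : ℕ) :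
    0 ≤ chat δ c i ∧ chat δ c i ≤ 1 := by
  unfold chat
  by_cases h0 : i = 0
  · simp [h0]
  · rw [if_neg h0]
    by_cases h1 : i - 1 < m
    · rw [dif_pos h1]
      constructor
      · positivity
      · calc (c ⟨i-1, h1⟩ : ℝ) * δ ≤ (n' : ℝ) * δ := by
              apply mul_le_mul_of_nonneg_right _ (le_of_lt hδ)
              exact_mod_cast hc _
          _ ≤ 1 := hn
    · rw [dif_neg h1]; norm_num

lemma chat_mono {δ : ℝ} (hδ : 0 < δ) {m : ℕ} {c : Fin m → ℕ} {n' : ℕ}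
    (hc : ∀ i, c i ≤ n') (hn : (n' : ℝ) * δ ≤ 1)
    (hmono : ∀ i j : Fin m, i ≤ j → c i ≤ c j) :
    ∀ i j : ℕ, i ≤ j → chat δ c i ≤ chat δ c j := by
  intro i j hij
  by_cases h0 : i = 0
  · rw [h0]
    have : chat δ c 0 = 0 := by simp [chat]
    rw [this]
    exact (chat_mem hδ hc hn j).1
  · have hj0 : j ≠ 0 := by omega
    unfold chat
    rw [if_neg h0, if_neg hj0]
    by_cases h1 : j - 1 < m
    · have h2 : i - 1 < m := by omega
      rw [dif_pos h1, dif_pos h2]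
      apply mul_le_mul_of_nonneg_right _ (le_of_lt hδ)
      have : c ⟨i-1, h2⟩ ≤ c ⟨j-1, h1⟩ := by
        apply hmono
        simp [Fin.le_def]
        omega
      exact_mod_cast this
    · rw [dif_neg h1]
      by_cases h2 : i - 1 < m
      · rw [dif_pos h2]
        have := (chat_mem hδ hc hn i).2
        unfold chat at this
        rw [if_neg h0, dif_pos h2] at this
        exact this
      · rw [dif_neg h2]

lemma cdf_cover {K : ℕ} (hK : 1 ≤ K) {δ : ℝ} (hδ : 0 < δ) {n' : ℕ}
    (hfl : Nat.floor (1/δ) ≤ n')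
    (v : Fin K → ℝ) (hv0 : ∀ a, 0 ≤ v a) (hv1 : ∑ a, v a = 1) :
    ∃ c : Fin (K-1) → Fin (n'+1), (∀ i j : Fin (K-1), i ≤ j → c i ≤ c j) ∧
      ∀ a : Fin K,
        chat δ (fun i => (c i : ℕ)) (a.1+1) - chat δ (fun i => (c i : ℕ)) a.1 - δ ≤ v a ∧
        v a ≤ chat δ (fun i => (c i : ℕ)) (a.1+1) - chat δ (fun i => (c i : ℕ)) a.1 + δ := by
  classical
  set F : ℕ → ℝ := fun mm => ∑ b : Fin K, if (b : ℕ) < mm then v b else 0 with hF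
  have hF0 : F 0 = 0 := by simp [hF]
  have hFK : ∀ mm, K ≤ mm → F mm = 1 := by
    intro mm hmm
    rw [hF, ← hv1]
    apply Finset.sum_congr rfl
    intro b _
    rw [if_pos (lt_of_lt_of_le b.isLt hmm)]
  have hFmono : ∀ i j, i ≤ j → F i ≤ F j := by
    intro i j hij
    apply Finset.sum_le_sum
    intro b _
    by_cases h : (b:ℕ) < i
    · rw [if_pos h, if_pos (lt_of_lt_of_le h hij)]
    · rw [if_neg h]
      by_cases h2 : (b:ℕ) < j
      · rw [if_pos h2]; exact hv0 b
      · rw [if_neg h2]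
  have hFnn : ∀ i, 0 ≤ F i := by
    intro i; rw [← hF0]; exact hFmono 0 i (Nat.zero_le _)
  have hFle1 : ∀ i, F i ≤ 1 := by
    intro i
    rcases le_or_gt K i with h | h
    · rw [hFK i h]
    · rw [← hFK K le_rfl]; exact hFmono i K (le_of_lt h)
  have hfloor_le : ∀ i : Fin (K-1), Nat.floor (F (i.1+1) / δ) ≤ n' := by
    intro i
    refine le_trans (Nat.floor_le_floor ?_) hfl
    gcongr
    exact hFle1 _
  set c : Fin (K-1) → Fin (n'+1) := fun i => ⟨Nat.floor (F (i.1+1) / δ),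
    Nat.lt_succ_of_le (hfloor_le i)⟩ with hcdef
  have hkey : ∀ i : ℕ, i ≤ K → chat δ (fun j => (c j : ℕ)) i ≤ F i ∧
      F i ≤ chat δ (fun j => (c j : ℕ)) i + δ := by
    intro i hiK
    by_cases h0 : i = 0
    · subst h0
      rw [hF0]
      have : chat δ (fun j => (c j : ℕ)) 0 = 0 := by simp [chat]
      rw [this]
      exact ⟨le_rfl, by linarith⟩
    · by_cases h1 : i - 1 < K - 1
      · have hchat : chat δ (fun j => (c j : ℕ)) i = (Nat.floor (F i / δ) : ℝ) * δ := by
          unfold chat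
          rw [if_neg h0, dif_pos h1]
          have hc1 : (c ⟨i-1, h1⟩ : ℕ) = Nat.floor (F i / δ) := by
            simp only [hcdef]
            have : i - 1 + 1 = i := by omega
            rw [this]
          show ((c ⟨i-1, h1⟩ : ℕ) : ℝ) * δ = _
          rw [hc1]
        rw [hchat]
        constructor
        · calc (Nat.floor (F i / δ) : ℝ) * δ
              ≤ (F i / δ) * δ := mul_le_mul_of_nonneg_right
                (Nat.floor_le (div_nonneg (hFnn i) (le_of_lt hδ))) (le_of_lt hδ)
            _ = F i := by field_simp
        · have h2 := Nat.lt_floor_add_one (F i / δ)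
          rw [div_lt_iff₀ hδ] at h2
          linarith
      · have hchat : chat δ (fun j => (c j : ℕ)) i = 1 := by
          unfold chat
          rw [if_neg h0, dif_neg h1]
        rw [hchat, hFK i (by omega)]
        exact ⟨le_rfl, by linarith⟩
  have hva : ∀ a : Fin K, v a = F (a.1+1) - F a.1 := by
    intro a
    have hterm : ∀ b : Fin K,
        ((if (b:ℕ) < a.1+1 then v b else 0) - (if (b:ℕ) < a.1 then v b else 0))
        = if b = a then v b else 0 := by
      intro b
      by_cases h1 : (b:ℕ) < a.1
      · rw [if_pos h1, if_pos (by omega : (b:ℕ) < a.1+1),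
          if_neg (by intro h; rw [h] at h1; omega)]
        ring
      · by_cases h2 : b = a
        · subst h2
          rw [if_pos (by omega : (b:ℕ) < b.1+1), if_neg h1, if_pos rfl]
          ring
        · have h3 : ¬ ((b:ℕ) < a.1 + 1) := by
            have : (b:ℕ) ≠ a.1 := fun h => h2 (Fin.ext h)
            omega
          rw [if_neg h3, if_neg h1, if_neg h2]
          ring
    calc v a = ∑ b : Fin K, if b = a then v b else 0 := by
          rw [Finset.sum_ite_eq' Finset.univ a v]; simp
      _ = ∑ b : Fin K, ((if (b:ℕ) < a.1+1 then v b else 0) - (if (b:ℕ) < a.1 then v b else 0)) := by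
          exact (Finset.sum_congr rfl (fun b _ => hterm b)).symm
      _ = F (a.1+1) - F a.1 := by rw [hF, Finset.sum_sub_distrib]
  refine ⟨c, ?_, ?_⟩
  · intro i j hij
    have hij' : i.1 + 1 ≤ j.1 + 1 := by
      have : i.1 ≤ j.1 := hij
      omega
    have hFij : F (i.1+1) ≤ F (j.1+1) := hFmono _ _ hij'
    show c i ≤ c j
    simp only [hcdef, Fin.mk_le_mk]
    apply Nat.floor_le_floor
    gcongr
  · intro a
    have h1 := hkey a.1 (le_of_lt a.isLt)
    have h2 := hkey (a.1+1) a.isLt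
    rw [hva a]
    exact ⟨by linarith [h1.1, h1.2, h2.1, h2.2], by linarith [h1.1, h1.2, h2.1, h2.2]⟩

open Finset in
lemma hmmWeight_mem {K L : ℕ} {π : Fin K → ℝ} {Q : Matrix (Fin K) (Fin K) ℝ}
    (hπ : IsProbVec π) (hQ : IsStochastic Q) (k : Fin L → Fin K) :
    0 ≤ hmmWeight π Q k ∧ hmmWeight π Q k ≤ 1 := by
  have h01 : ∀ i : Fin L, 0 ≤ (if (i : ℕ) = 0 then π (k i)
      else Q (k ⟨i.1 - 1, lt_of_le_of_lt (Nat.sub_le _ _) i.isLt⟩) (k i)) ∧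
      (if (i : ℕ) = 0 then π (k i)
      else Q (k ⟨i.1 - 1, lt_of_le_of_lt (Nat.sub_le _ _) i.isLt⟩) (k i)) ≤ 1 := by
    intro i
    by_cases h : (i : ℕ) = 0
    · rw [if_pos h]
      exact ⟨hπ.1 _, prob_le_one hπ.1 hπ.2 _⟩
    · rw [if_neg h]
      exact ⟨hQ.1 _ _, prob_le_one (hQ.1 _) (hQ.2 _) _⟩
  unfold hmmWeight
  exact ⟨Finset.prod_nonneg (fun i _ => (h01 i).1),
    Finset.prod_le_one (fun i _ => (h01 i).1) (fun i _ => (h01 i).2)⟩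

open Finset in
/-- For every `ε ∈ (0,2)`, the set `U` of arrays `(π(k_1) ∏_{i=2}^L Q(k_{i−1},k_i))_k`
(with `π` a probability vector and `Q` row-stochastic) admits a covering by brackets of
`ℓ²`-size at most `ε L K^{L/2}`, with all lower bounds in `[0,1]`, of cardinality at most
`(2/ε)^{K²−1}`. -/
theorem bracket_covering_hmm_weights (ε : ℝ) (hε0 : 0 < ε) (hε2 : ε < 2)
    (K L : ℕ) (hK : 1 ≤ K) (hL : 1 ≤ L) :
    ∃ s : Finset (((Fin L → Fin K) → ℝ) × ((Fin L → Fin K) → ℝ)),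
      (s.card : ℝ) ≤ (2 / ε) ^ (K ^ 2 - 1) ∧
      (∀ p ∈ s,
        (∀ k, 0 ≤ p.1 k ∧ p.1 k ≤ 1) ∧
        ∑ k, (p.2 k - p.1 k) ^ 2 ≤ ε ^ 2 * (L : ℝ) ^ 2 * (K : ℝ) ^ L) ∧
      ∀ (π : Fin K → ℝ) (Q : Matrix (Fin K) (Fin K) ℝ), IsProbVec π → IsStochastic Q →
        ∃ p ∈ s, ∀ k, p.1 k ≤ hmmWeight π Q k ∧ hmmWeight π Q k ≤ p.2 k := by
  classical
  have hx1 : (1:ℝ) ≤ 2 / ε := by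
    rw [le_div_iff₀ hε0]; linarith
  have hxpow : (1:ℝ) ≤ (2/ε) ^ (K^2 - 1) := one_le_pow₀ hx1
  -- Case K = 1
  by_cases hK1 : K = 1
  · subst hK1
    refine ⟨{(fun _ => 1, fun _ => 1)}, ?_, ?_, ?_⟩
    · simpa using hxpow
    · intro p hp
      rw [Finset.mem_singleton] at hp
      subst hp
      refine ⟨fun k => ⟨zero_le_one, le_rfl⟩, ?_⟩
      have : ∀ k : Fin L → Fin 1, ((1:ℝ) - 1)^2 = 0 := fun _ => by ring
      simp only [sub_self]
      have hz : (0:ℝ)^2 = 0 := by norm_num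
      rw [hz]
      simp only [Finset.sum_const, smul_zero]
      positivity
    · intro π Q hπv hQv
      refine ⟨_, Finset.mem_singleton_self _, fun k => ?_⟩
      have hπ1 : π 0 = 1 := by
        have := hπv.2
        simpa [Fin.sum_univ_one] using this
      have hQ1 : Q 0 0 = 1 := by
        have := hQv.2 0
        simpa [Fin.sum_univ_one] using this
      have hw : hmmWeight π Q k = 1 := by
        unfold hmmWeight
        rw [Finset.prod_eq_one]
        intro i _
        by_cases h : (i:ℕ) = 0
        · rw [if_pos h]
          have : k i = 0 := Subsingleton.elim _ _
          rw [this, hπ1]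
        · rw [if_neg h]
          have h1 : k ⟨i.1 - 1, lt_of_le_of_lt (Nat.sub_le _ _) i.isLt⟩ = 0 :=
            Subsingleton.elim _ _
          have h2 : k i = 0 := Subsingleton.elim _ _
          rw [h1, h2, hQ1]
      rw [hw]
      exact ⟨le_rfl, le_rfl⟩
  -- Case 1 ≤ ε L
  by_cases hεL : 1 ≤ ε * L
  · refine ⟨{(fun _ => 0, fun _ => 1)}, ?_, ?_, ?_⟩
    · simpa using hxpow
    · intro p hp
      rw [Finset.mem_singleton] at hp
      subst hp
      refine ⟨fun k => ⟨le_rfl, zero_le_one⟩, ?_⟩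
      have hcard : ∑ _k : Fin L → Fin K, ((1:ℝ) - 0)^2 = (K:ℝ)^L := by
        simp [Finset.sum_const, Finset.card_univ, Fintype.card_fun]
      dsimp only
      rw [hcard]
      have hKL : (0:ℝ) ≤ (K:ℝ)^L := by positivity
      nlinarith [sq_nonneg (ε * L - 1)]
    · intro π Q hπv hQv
      refine ⟨_, Finset.mem_singleton_self _, fun k => ?_⟩
      exact (hmmWeight_mem hπv hQv k)
  -- now ε L < 1
  push_neg at hεL
  have hK2' : 2 ≤ K := by omega
  have hε1 : ε < 1 := by
    have h1 : ε * 1 ≤ ε * L := by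
      apply mul_le_mul_of_nonneg_left _ (le_of_lt hε0)
      exact_mod_cast hL
    have h2 : (1:ℝ) ≤ L := by exact_mod_cast hL
    nlinarith
  set n : ℕ := Nat.floor (1/ε) with hn
  have h1ε : (1:ℝ) ≤ 1/ε := by
    rw [le_div_iff₀ hε0]; linarith
  have hnR : (n:ℝ) ≤ 1/ε := Nat.floor_le (by linarith)
  have hn1R : ((n:ℝ) + 1) ≤ 2/ε := by
    have : (2:ℝ)/ε = 1/ε + 1/ε := by ring
    rw [this]
    linarith
  have hnε : (n:ℝ) * ε ≤ 1 := by
    have h := mul_le_mul_of_nonneg_right hnR (le_of_lt hε0)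
    rwa [div_mul_cancel₀ 1 (ne_of_gt hε0)] at h
  have hfb : ∀ v : ℝ, 0 ≤ v → v ≤ 1 →
      Nat.floor (v/ε) ≤ n ∧ (Nat.floor (v/ε) : ℝ) * ε ≤ v ∧
      v < (Nat.floor (v/ε) : ℝ) * ε + ε := by
    intro v hv0 hv1
    refine ⟨Nat.floor_le_floor (by gcongr), ?_, ?_⟩
    · have h := Nat.floor_le (show 0 ≤ v/ε by positivity)
      calc (Nat.floor (v/ε) : ℝ) * ε ≤ (v/ε) * ε := mul_le_mul_of_nonneg_right h (le_of_lt hε0)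
        _ = v := by field_simp
    · have h := Nat.lt_floor_add_one (v/ε)
      have h2 : v / ε * ε < ((Nat.floor (v/ε) : ℝ) + 1) * ε :=
        mul_lt_mul_of_pos_right h hε0
      rw [div_mul_cancel₀ v (ne_of_gt hε0)] at h2
      linarith
  -- case K = 2
  by_cases hK2 : K = 2
  · subst hK2
    set plow : Fin (n+1) → Fin 2 → ℝ :=
      fun j a => if a = 0 then (j:ℝ)*ε else max (1 - (j:ℝ)*ε - ε) 0 with hplow
    set pup : Fin (n+1) → Fin 2 → ℝ :=
      fun j a => if a = 0 then min ((j:ℝ)*ε + ε) 1 else 1 - (j:ℝ)*ε with hpup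
    have hjε : ∀ j : Fin (n+1), (j:ℝ)*ε ≤ 1 := by
      intro j
      have hj : (j:ℕ) ≤ n := Nat.lt_succ_iff.1 j.isLt
      have hj' : ((j:ℕ):ℝ) ≤ (n:ℝ) := by exact_mod_cast hj
      nlinarith
    have hprops : ∀ j : Fin (n+1), ∀ a, 0 ≤ plow j a ∧ plow j a ≤ pup j a ∧
        pup j a ≤ 1 ∧ pup j a - plow j a ≤ ε := by
      intro j a
      have h1 : (0:ℝ) ≤ (j:ℝ)*ε := by positivity
      have h2 := hjε j
      by_cases ha : a = 0
      · rw [hplow, hpup]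
        simp only [if_pos ha]
        refine ⟨h1, le_min (by linarith) h2, min_le_right _ _, ?_⟩
        have := min_le_left ((j:ℝ)*ε + ε) 1
        linarith
      · rw [hplow, hpup]
        simp only [if_neg ha]
        refine ⟨le_max_right _ _, max_le (by linarith) (by linarith), by linarith, ?_⟩
        have := le_max_left (1 - (j:ℝ)*ε - ε) 0
        linarith
    have hcov2 : ∀ v : Fin 2 → ℝ, (∀ a, 0 ≤ v a) → (∑ a, v a = 1) →
        ∃ j : Fin (n+1), ∀ a, plow j a ≤ v a ∧ v a ≤ pup j a := by
      intro v hv0 hv1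
      have hsum : v 0 + v 1 = 1 := by rw [← hv1]; simp [Fin.sum_univ_two]
      have hv01 : v 0 ≤ 1 := by have := hv0 1; linarith
      obtain ⟨hfn, hfl, hfu⟩ := hfb (v 0) (hv0 0) hv01
      refine ⟨⟨Nat.floor (v 0/ε), Nat.lt_succ_of_le hfn⟩, ?_⟩
      intro a
      have hjv : ((⟨Nat.floor (v 0/ε), Nat.lt_succ_of_le hfn⟩ : Fin (n+1)) : ℝ)
          = (Nat.floor (v 0/ε) : ℝ) := rfl
      by_cases ha : a = 0
      · rw [hplow, hpup]
        simp only [if_pos ha, hjv]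
        subst ha
        exact ⟨hfl, le_min (by linarith) hv01⟩
      · rw [hplow, hpup]
        simp only [if_neg ha, hjv]
        have ha1 : a = 1 := by omega
        subst ha1
        constructor
        · apply max_le _ (hv0 1)
          linarith
        · linarith
    have hcovb : ∀ (π : Fin 2 → ℝ) (Q : Matrix (Fin 2) (Fin 2) ℝ),
        IsProbVec π → IsStochastic Q →
        ∃ c ∈ (Finset.univ : Finset (Fin (n+1) × (Fin 2 → Fin (n+1)))),
          (∀ a, (fun c => plow c.1) c a ≤ π a ∧ π a ≤ (fun c => pup c.1) c a) ∧
          (∀ a b, (fun c r => plow (c.2 r)) c a b ≤ Q a b ∧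
            Q a b ≤ (fun c r => pup (c.2 r)) c a b) := by
      intro π Q hπv hQv
      obtain ⟨jπ, hjπ⟩ := hcov2 π hπv.1 hπv.2
      choose jQ hjQ using fun r => hcov2 (Q r) (hQv.1 r) (hQv.2 r)
      exact ⟨(jπ, jQ), Finset.mem_univ _, hjπ, fun a b => hjQ a b⟩
    obtain ⟨s, hcard, hprops', hcov'⟩ := bracket_main (K := 2) hL ε hε0
      (I := (Finset.univ : Finset (Fin (n+1) × (Fin 2 → Fin (n+1)))))
      (lπ := fun c => plow c.1) (uπ := fun c => pup c.1)
      (lQ := fun c r => plow (c.2 r)) (uQ := fun c r => pup (c.2 r))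
      (fun c _ a => hprops c.1 a)
      (fun c _ a b => ⟨(hprops (c.2 a) b).1, (hprops (c.2 a) b).2.1,
        (hprops (c.2 a) b).2.2.1, fun _ => (hprops (c.2 a) b).2.2.2⟩)
      hcovb
    refine ⟨s, ?_, hprops', hcov'⟩
    have hcu : (Finset.univ : Finset (Fin (n+1) × (Fin 2 → Fin (n+1)))).card
        = (n+1)^3 := by
      simp [Finset.card_univ, Fintype.card_fun]
      ring
    rw [hcu] at hcard
    have h3 : (2:ℕ)^2 - 1 = 3 := by norm_num
    rw [h3]
    calc (s.card : ℝ) ≤ ((n+1)^3 : ℕ) := by exact_mod_cast hcard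
      _ = ((n:ℝ)+1)^3 := by push_cast; ring
      _ ≤ (2/ε)^3 := by
          apply pow_le_pow_left₀ (by positivity) hn1R
  -- now 3 ≤ K
  have hK3 : 3 ≤ K := by omega
  have hKpow : K ≤ K^2 - 1 := by
    have h1 : K + 1 ≤ K * K := by
      calc K + 1 ≤ 3 * K := by omega
        _ ≤ K * K := Nat.mul_le_mul_right K hK3
    have h2 : K^2 = K * K := by ring
    omega
  by_cases hL1 : L = 1
  · subst hL1
    set plow : (Fin K → Fin (n+1)) → Fin K → ℝ := fun c a => ((c a : ℕ):ℝ)*ε with hplow2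
    set pup : (Fin K → Fin (n+1)) → Fin K → ℝ :=
      fun c a => min (((c a : ℕ):ℝ)*ε + ε) 1 with hpup2
    have hjε : ∀ j : Fin (n+1), ((j:ℕ):ℝ)*ε ≤ 1 := by
      intro j
      have hj : (j:ℕ) ≤ n := Nat.lt_succ_iff.1 j.isLt
      have hj' : ((j:ℕ):ℝ) ≤ (n:ℝ) := by exact_mod_cast hj
      nlinarith
    have hprops : ∀ c : Fin K → Fin (n+1), ∀ a, 0 ≤ plow c a ∧ plow c a ≤ pup c a ∧
        pup c a ≤ 1 ∧ pup c a - plow c a ≤ ε := by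
      intro c a
      simp only [hplow2, hpup2]
      have h1 : (0:ℝ) ≤ ((c a:ℕ):ℝ)*ε := by positivity
      have h2 := hjε (c a)
      refine ⟨h1, le_min (by linarith) h2, min_le_right _ _, ?_⟩
      have := min_le_left (((c a:ℕ):ℝ)*ε + ε) 1
      linarith
    have hcovb : ∀ (π : Fin K → ℝ) (Q : Matrix (Fin K) (Fin K) ℝ),
        IsProbVec π → IsStochastic Q →
        ∃ c ∈ (Finset.univ : Finset (Fin K → Fin (n+1))),
          (∀ a, plow c a ≤ π a ∧ π a ≤ pup c a) ∧
          (∀ a b, (0:ℝ) ≤ Q a b ∧ Q a b ≤ 1) := by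
      intro π Q hπv hQv
      have hb : ∀ a, Nat.floor (π a / ε) ≤ n := fun a =>
        (hfb (π a) (hπv.1 a) (prob_le_one hπv.1 hπv.2 a)).1
      refine ⟨fun a => ⟨Nat.floor (π a / ε), Nat.lt_succ_of_le (hb a)⟩, Finset.mem_univ _,
        ?_, ?_⟩
      · intro a
        obtain ⟨_, hfl, hfu⟩ := hfb (π a) (hπv.1 a) (prob_le_one hπv.1 hπv.2 a)
        exact ⟨hfl, le_min (by linarith) (prob_le_one hπv.1 hπv.2 a)⟩
      · intro a b
        exact ⟨hQv.1 a b, prob_le_one (hQv.1 a) (hQv.2 a) b⟩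
    obtain ⟨s, hcard, hprops', hcov'⟩ := bracket_main (K := K) hL ε hε0
      (I := (Finset.univ : Finset (Fin K → Fin (n+1))))
      (lπ := plow) (uπ := pup)
      (lQ := fun _ _ _ => (0:ℝ)) (uQ := fun _ _ _ => (1:ℝ))
      (fun c _ a => hprops c a)
      (fun c _ a b => ⟨le_rfl, zero_le_one, le_rfl, fun h2 => by omega⟩)
      hcovb
    refine ⟨s, ?_, hprops', hcov'⟩
    have hcu : (Finset.univ : Finset (Fin K → Fin (n+1))).card = (n+1)^K := by
      simp [Finset.card_univ, Fintype.card_fun]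
    rw [hcu] at hcard
    calc (s.card : ℝ) ≤ ((n+1)^K : ℕ) := by exact_mod_cast hcard
      _ = ((n:ℝ)+1)^K := by push_cast; ring
      _ ≤ (2/ε)^K := pow_le_pow_left₀ (by positivity) hn1R K
      _ ≤ (2/ε)^(K^2-1) := pow_le_pow_right₀ hx1 hKpow
  -- main case: 3 ≤ K, 2 ≤ L
  have hL2 : 2 ≤ L := by omega
  have hεhalf : ε < 1/2 := by
    have h1 : ε * 2 ≤ ε * L := by
      apply mul_le_mul_of_nonneg_left _ (le_of_lt hε0)
      exact_mod_cast hL2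
    linarith
  set δ : ℝ := ε/2 with hδdef
  have hδ : 0 < δ := by rw [hδdef]; linarith
  set n' : ℕ := Nat.floor (2/ε) with hn'def
  have hn'4 : 4 ≤ n' := by
    apply Nat.le_floor
    rw [le_div_iff₀ hε0]
    norm_num
    linarith
  have hn'R : (n':ℝ) ≤ 2/ε := Nat.floor_le (by positivity)
  have hn'δ : (n':ℝ) * δ ≤ 1 := by
    rw [hδdef]
    calc (n':ℝ) * (ε/2) ≤ (2/ε) * (ε/2) := by
          apply mul_le_mul_of_nonneg_right hn'R (by linarith)
      _ = 1 := by field_simp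
  have hfl' : Nat.floor (1/δ) ≤ n' := by
    rw [hn'def]
    apply le_of_eq
    congr 1
    rw [hδdef]
    field_simp
  set Nmono : Finset (Fin (K-1) → Fin (n'+1)) :=
    Finset.univ.filter (fun c => ∀ i j : Fin (K-1), i ≤ j → c i ≤ c j) with hNdef
  set vlow : (Fin (K-1) → Fin (n'+1)) → Fin K → ℝ := fun c a =>
    max (chat δ (fun i => (c i : ℕ)) (a.1+1) - chat δ (fun i => (c i : ℕ)) a.1 - δ) 0
    with hvlow
  set vup : (Fin (K-1) → Fin (n'+1)) → Fin K → ℝ := fun c a =>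
    min (chat δ (fun i => (c i : ℕ)) (a.1+1) - chat δ (fun i => (c i : ℕ)) a.1 + δ) 1
    with hvup
  have hprops : ∀ c : Fin (K-1) → Fin (n'+1), (∀ i j : Fin (K-1), i ≤ j → c i ≤ c j) →
      ∀ a : Fin K, 0 ≤ vlow c a ∧ vlow c a ≤ vup c a ∧ vup c a ≤ 1 ∧
        vup c a - vlow c a ≤ ε := by
    intro c hmono a
    have hcb : ∀ i, (fun i => ((c i : ℕ))) i ≤ n' := fun i => Nat.lt_succ_iff.1 (c i).isLt
    have hmono' : ∀ i j : Fin (K-1), i ≤ j → (fun i => ((c i : ℕ))) i ≤ (fun i => ((c i : ℕ))) j :=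
      fun i j hij => hmono i j hij
    have hm1 := chat_mem hδ hcb hn'δ a.1
    have hm2 := chat_mem hδ hcb hn'δ (a.1+1)
    have hmo := chat_mono hδ hcb hn'δ hmono' a.1 (a.1+1) (Nat.le_succ _)
    simp only [hvlow, hvup]
    constructor
    · exact le_max_right _ _
    constructor
    · apply max_le
      · apply le_min
        · linarith
        · linarith [hm2.2, hm1.1]
      · apply le_min
        · linarith [hm2.1, hm1.2]
        · linarith
    constructor
    · exact min_le_right _ _
    · have h1 := min_le_left (chat δ (fun i => ((c i : ℕ))) (a.1+1)
        - chat δ (fun i => ((c i : ℕ))) a.1 + δ) 1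
      have h2 := le_max_left (chat δ (fun i => ((c i : ℕ))) (a.1+1)
        - chat δ (fun i => ((c i : ℕ))) a.1 - δ) 0
      rw [hδdef] at h1 h2 ⊢
      linarith
  have hcovv : ∀ v : Fin K → ℝ, (∀ a, 0 ≤ v a) → (∑ a, v a = 1) →
      ∃ c ∈ Nmono, ∀ a, vlow c a ≤ v a ∧ v a ≤ vup c a := by
    intro v hv0 hv1
    obtain ⟨c, hcmono, hcb⟩ := cdf_cover hK hδ hfl' v hv0 hv1
    refine ⟨c, by rw [hNdef]; exact Finset.mem_filter.2 ⟨Finset.mem_univ _, hcmono⟩, ?_⟩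
    intro a
    simp only [hvlow, hvup]
    constructor
    · exact max_le (hcb a).1 (hv0 a)
    · exact le_min (hcb a).2 (prob_le_one hv0 hv1 a)
  have hcovb : ∀ (π : Fin K → ℝ) (Q : Matrix (Fin K) (Fin K) ℝ),
      IsProbVec π → IsStochastic Q →
      ∃ c ∈ Nmono ×ˢ Fintype.piFinset (fun _ : Fin K => Nmono),
        (∀ a, vlow c.1 a ≤ π a ∧ π a ≤ vup c.1 a) ∧
        (∀ a b, vlow (c.2 a) b ≤ Q a b ∧ Q a b ≤ vup (c.2 a) b) := by
    intro π Q hπv hQv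
    obtain ⟨cπ, hcπN, hcπ⟩ := hcovv π hπv.1 hπv.2
    choose cQ hcQN hcQ using fun r => hcovv (Q r) (hQv.1 r) (hQv.2 r)
    refine ⟨(cπ, cQ), ?_, hcπ, fun a b => hcQ a b⟩
    exact Finset.mem_product.2 ⟨hcπN, Fintype.mem_piFinset.2 hcQN⟩
  have hmemprop : ∀ c : (Fin (K-1) → Fin (n'+1)) × (Fin K → (Fin (K-1) → Fin (n'+1))),
      c ∈ Nmono ×ˢ Fintype.piFinset (fun _ : Fin K => Nmono) →
      (∀ i j : Fin (K-1), i ≤ j → c.1 i ≤ c.1 j) ∧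
      (∀ r, ∀ i j : Fin (K-1), i ≤ j → c.2 r i ≤ c.2 r j) := by
    intro c hc
    rw [Finset.mem_product] at hc
    constructor
    · exact (Finset.mem_filter.1 (by rw [hNdef] at hc; exact hc.1)).2
    · intro r
      have := Fintype.mem_piFinset.1 hc.2 r
      exact (Finset.mem_filter.1 (by rw [hNdef] at this; exact this)).2
  obtain ⟨s, hcard, hprops', hcov'⟩ := bracket_main (K := K) hL ε hε0
    (I := Nmono ×ˢ Fintype.piFinset (fun _ : Fin K => Nmono))
    (lπ := fun c => vlow c.1) (uπ := fun c => vup c.1)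
    (lQ := fun c r => vlow (c.2 r)) (uQ := fun c r => vup (c.2 r))
    (fun c hc a => hprops c.1 (hmemprop c hc).1 a)
    (fun c hc a b => ⟨(hprops (c.2 a) ((hmemprop c hc).2 a) b).1,
      (hprops (c.2 a) ((hmemprop c hc).2 a) b).2.1,
      (hprops (c.2 a) ((hmemprop c hc).2 a) b).2.2.1,
      fun _ => (hprops (c.2 a) ((hmemprop c hc).2 a) b).2.2.2⟩)
    hcovb
  refine ⟨s, ?_, hprops', hcov'⟩
  -- cardinality
  have hNle : Nmono.card ≤ n' ^ (K-1) := by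
    calc Nmono.card ≤ (n' + (K-1)).choose (K-1) := card_mono_le (K-1) n'
      _ ≤ n' ^ (K-1) := choose_le_pow_spec n' (K-1) hn'4 (by omega)
  have h2 : (n' ^ (K-1)) * (n' ^ (K-1)) ^ K = n' ^ ((K-1) * (K+1)) := by
    rw [← pow_mul, ← pow_add]
    congr 1
    ring
  have h3 : (K-1) * (K+1) = K^2 - 1 := by
    obtain ⟨mm, rfl⟩ : ∃ mm, K = mm + 1 := ⟨K - 1, by omega⟩
    have e1 : mm + 1 - 1 = mm := by omega
    rw [e1]
    have h4 : (mm+1)^2 = mm * (mm+1+1) + 1 := by ring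
    rw [h4]
    omega
  have hIcard : (Nmono ×ˢ Fintype.piFinset (fun _ : Fin K => Nmono)).card
      ≤ n' ^ (K^2 - 1) := by
    simp only [Finset.card_product, Fintype.card_piFinset_const, Fintype.card_fin]
    calc Nmono.card * Nmono.card ^ K ≤ (n' ^ (K-1)) * (n' ^ (K-1)) ^ K :=
          Nat.mul_le_mul hNle (Nat.pow_le_pow_left hNle K)
      _ = n' ^ ((K-1) * (K+1)) := h2
      _ = n' ^ (K^2-1) := by rw [h3]
  calc (s.card : ℝ) ≤ ((Nmono ×ˢ Fintype.piFinset (fun _ : Fin K => Nmono)).card : ℝ) := by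
        exact_mod_cast hcard
    _ ≤ ((n' ^ (K^2-1) : ℕ) : ℝ) := by exact_mod_cast hIcard
    _ = ((n':ℝ)) ^ (K^2-1) := by push_cast; ring
    _ ≤ (2/ε) ^ (K^2-1) := pow_le_pow_left₀ (by positivity) hn'R _
end

section
/- Let A, B > 0 and define H(x) = A·log(max(B/x, 1)) and φ(x) = x√(πA)·(1 + √(log(max(B/x,1)))) for x > 0. Then for all x > 0: (i) x² H(x) ≤ φ(x)², and (ii) ∫_0^x √(H(u)) du ≤ φ(x). -/
open MeasureTheory Set Real

lemma image_aux (σ : ℝ) (hσ : 0 < σ) :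
    (fun t => σ * Real.exp (-t)) '' Set.Ioi (0:ℝ) = Set.Ioo 0 σ := by
  ext u
  constructor
  · rintro ⟨t, ht, rfl⟩
    simp only [Set.mem_Ioi] at ht
    have h1 : Real.exp (-t) < 1 := Real.exp_lt_one_iff.mpr (by linarith)
    exact ⟨mul_pos hσ (Real.exp_pos _), mul_lt_of_lt_one_right hσ h1⟩
  · rintro ⟨h1, h2⟩
    refine ⟨-Real.log (u / σ), ?_, ?_⟩
    · simp only [Set.mem_Ioi]
      have := Real.log_neg (div_pos h1 hσ) ((div_lt_one hσ).mpr h2)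
      linarith
    · simp only [neg_neg]
      rw [Real.exp_log (div_pos h1 hσ)]
      field_simp

lemma deriv_aux (σ : ℝ) : ∀ t ∈ Set.Ioi (0:ℝ),
    HasDerivWithinAt (fun t => σ * Real.exp (-t)) (-(σ * Real.exp (-t))) (Set.Ioi 0) t := by
  intro t _
  have h : HasDerivAt (fun t : ℝ => σ * Real.exp (-t)) (σ * (Real.exp (-t) * (-1))) t :=
    ((hasDerivAt_neg t).exp).const_mul σ
  simpa [mul_comm, mul_assoc] using h.hasDerivWithinAt

lemma inj_aux (σ : ℝ) (hσ : 0 < σ) :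
    Set.InjOn (fun t => σ * Real.exp (-t)) (Set.Ioi (0:ℝ)) := by
  intro a _ b _ h
  simp only at h
  have := mul_left_cancel₀ hσ.ne' h
  exact neg_injective (Real.exp_injective this)

lemma eq_on_aux (σ : ℝ) (hσ : 0 < σ) : ∀ t ∈ Set.Ioi (0:ℝ),
    |(-(σ * Real.exp (-t)))| • Real.sqrt (Real.log (σ / (σ * Real.exp (-t))))
      = σ * (Real.exp (-t) * t ^ ((3:ℝ)/2 - 1)) := by
  intro t ht
  simp only [Set.mem_Ioi] at ht
  have h1 : σ / (σ * Real.exp (-t)) = Real.exp t := by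
    rw [Real.exp_neg]; field_simp
  have h2 : |(-(σ * Real.exp (-t)))| = σ * Real.exp (-t) := by
    rw [abs_neg, abs_of_pos (mul_pos hσ (Real.exp_pos _))]
  rw [h1, h2, Real.log_exp, smul_eq_mul, Real.sqrt_eq_rpow]
  norm_num [mul_assoc]

lemma model_integrable (σ : ℝ) (hσ : 0 < σ) :
    IntegrableOn (fun u => Real.sqrt (Real.log (σ / u))) (Set.Ioc 0 σ) := by
  rw [integrableOn_Ioc_iff_integrableOn_Ioo, ← image_aux σ hσ,
    integrableOn_image_iff_integrableOn_abs_deriv_smul measurableSet_Ioi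
      (deriv_aux σ) (inj_aux σ hσ)]
  exact MeasureTheory.IntegrableOn.congr_fun
    ((Real.GammaIntegral_convergent (by norm_num : (0:ℝ) < 3/2)).const_mul σ)
    (fun t ht => (eq_on_aux σ hσ t ht).symm) measurableSet_Ioi

lemma model_integral (σ : ℝ) (hσ : 0 < σ) :
    (∫ u in Set.Ioc (0:ℝ) σ, Real.sqrt (Real.log (σ / u))) = σ * (Real.sqrt Real.pi / 2) := by
  rw [integral_Ioc_eq_integral_Ioo, ← image_aux σ hσ,
    integral_image_eq_integral_abs_deriv_smul measurableSet_Ioi (deriv_aux σ) (inj_aux σ hσ)]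
  rw [setIntegral_congr_fun measurableSet_Ioi (eq_on_aux σ hσ)]
  rw [MeasureTheory.integral_const_mul, ← Real.Gamma_eq_integral (by norm_num : (0:ℝ) < 3/2)]
  have h : Real.Gamma (3/2) = (1/2) * Real.Gamma (1/2) := by
    have := Real.Gamma_add_one (s := 1/2) (by norm_num)
    norm_num at this ⊢
    linarith
  rw [h, Real.Gamma_one_half_eq]
  ring

lemma sqrt_add_le' {a b : ℝ} (ha : 0 ≤ a) (hb : 0 ≤ b) :
    Real.sqrt (a + b) ≤ Real.sqrt a + Real.sqrt b := by
  have h : a + b ≤ (Real.sqrt a + Real.sqrt b) ^ 2 := by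
    nlinarith [Real.sq_sqrt ha, Real.sq_sqrt hb, Real.sqrt_nonneg a, Real.sqrt_nonneg b]
  calc Real.sqrt (a + b) ≤ Real.sqrt ((Real.sqrt a + Real.sqrt b) ^ 2) := Real.sqrt_le_sqrt h
    _ = Real.sqrt a + Real.sqrt b := Real.sqrt_sq (by positivity)

/-- For `H(x) = A log(max(B/x, 1))` and `φ(x) = x √(πA) (1 + √(log(max(B/x,1))))`:
(i) `x² H(x) ≤ φ(x)²` and (ii) `∫_0^x √(H(u)) du ≤ φ(x)` for all `x > 0`. -/
theorem entropy_phi_bounds (A B : ℝ) (hA : 0 < A) (hB : 0 < B) (x : ℝ) (hx : 0 < x) :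
    x ^ 2 * (A * Real.log (max (B / x) 1))
      ≤ (x * Real.sqrt (Real.pi * A) * (1 + Real.sqrt (Real.log (max (B / x) 1)))) ^ 2 ∧
    (∫ u in Set.Ioc (0 : ℝ) x, Real.sqrt (A * Real.log (max (B / u) 1)))
      ≤ x * Real.sqrt (Real.pi * A) * (1 + Real.sqrt (Real.log (max (B / x) 1))) := by
  have hL : 0 ≤ Real.log (max (B / x) 1) := Real.log_nonneg (le_max_right _ _)
  set L := Real.log (max (B / x) 1) with hLdef
  have hπ : 1 ≤ Real.sqrt Real.pi := by
    rw [show (1:ℝ) = Real.sqrt 1 by simp]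
    exact Real.sqrt_le_sqrt (by linarith [Real.pi_gt_three])
  constructor
  · have hs : Real.sqrt (Real.pi * A) ^ 2 = Real.pi * A := Real.sq_sqrt (by positivity)
    have h2 : Real.sqrt L ^ 2 = L := Real.sq_sqrt hL
    have expand : (x * Real.sqrt (Real.pi * A) * (1 + Real.sqrt L)) ^ 2
        = x ^ 2 * (Real.pi * A) * (1 + Real.sqrt L) ^ 2 := by
      rw [mul_pow, mul_pow, hs]
    rw [expand]
    have hcore : A * L ≤ Real.pi * A * (1 + Real.sqrt L) ^ 2 := by
      nlinarith [Real.pi_gt_three, hA.le, Real.sqrt_nonneg L, h2,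
        mul_nonneg hA.le (Real.sqrt_nonneg L), mul_nonneg hA.le hL]
    calc x ^ 2 * (A * L) ≤ x ^ 2 * (Real.pi * A * (1 + Real.sqrt L) ^ 2) :=
          mul_le_mul_of_nonneg_left hcore (sq_nonneg x)
      _ = x ^ 2 * (Real.pi * A) * (1 + Real.sqrt L) ^ 2 := by ring
  · have key : ∀ u ∈ Set.Ioc (0:ℝ) x,
        Real.sqrt (Real.log (max (B / u) 1)) ≤ Real.sqrt L + Real.sqrt (Real.log (x / u)) := by
      intro u hu
      obtain ⟨hu0, hux⟩ := hu
      have hxu : 1 ≤ x / u := (one_le_div hu0).mpr hux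
      have hlog_xu : 0 ≤ Real.log (x / u) := Real.log_nonneg hxu
      have hmax : max (B / u) 1 ≤ max (B / x) 1 * (x / u) := by
        have h1 : max (B / x) 1 * (x / u) = max (B / x * (x / u)) (1 * (x / u)) :=
          max_mul_of_nonneg (B / x) 1 (div_pos hx hu0).le
        have h2 : B / x * (x / u) = B / u := by field_simp
        rw [h1, h2, one_mul]
        exact max_le_max le_rfl hxu
      have hlog : Real.log (max (B / u) 1) ≤ L + Real.log (x / u) := by
        calc Real.log (max (B / u) 1) ≤ Real.log (max (B / x) 1 * (x / u)) :=
              Real.log_le_log (lt_of_lt_of_le one_pos (le_max_right _ _)) hmax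
          _ = L + Real.log (x / u) := Real.log_mul (by positivity) (by positivity)
      calc Real.sqrt (Real.log (max (B / u) 1)) ≤ Real.sqrt (L + Real.log (x / u)) :=
            Real.sqrt_le_sqrt hlog
        _ ≤ Real.sqrt L + Real.sqrt (Real.log (x / u)) := sqrt_add_le' hL hlog_xu
    have hmono : (∫ u in Set.Ioc (0:ℝ) x, Real.sqrt (Real.log (max (B / u) 1)))
        ≤ ∫ u in Set.Ioc (0:ℝ) x, (Real.sqrt L + Real.sqrt (Real.log (x / u))) := by
      refine integral_mono_of_nonneg (ae_of_all _ fun u => Real.sqrt_nonneg _)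
        ((integrable_const _).add (model_integrable x hx)) ?_
      exact (ae_restrict_iff' measurableSet_Ioc).mpr (ae_of_all _ key)
    have hval : (∫ u in Set.Ioc (0:ℝ) x, (Real.sqrt L + Real.sqrt (Real.log (x / u))))
        = x * Real.sqrt L + x * (Real.sqrt Real.pi / 2) := by
      rw [integral_add (integrable_const _) (model_integrable x hx), setIntegral_const,
        model_integral x hx, Real.volume_real_Ioc_of_le hx.le]
      simp [ENNReal.toReal_ofReal hx.le, smul_eq_mul]
    have hsplit : (∫ u in Set.Ioc (0:ℝ) x, Real.sqrt (A * Real.log (max (B / u) 1)))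
        = Real.sqrt A * ∫ u in Set.Ioc (0:ℝ) x, Real.sqrt (Real.log (max (B / u) 1)) := by
      rw [← MeasureTheory.integral_const_mul]
      exact integral_congr_ae (ae_of_all _ fun u => Real.sqrt_mul hA.le _)
    have hπA : Real.sqrt (Real.pi * A) = Real.sqrt Real.pi * Real.sqrt A :=
      Real.sqrt_mul Real.pi_pos.le A
    rw [hsplit, hπA]
    calc Real.sqrt A * ∫ u in Set.Ioc (0:ℝ) x, Real.sqrt (Real.log (max (B / u) 1))
        ≤ Real.sqrt A * (x * Real.sqrt L + x * (Real.sqrt Real.pi / 2)) := by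
          exact mul_le_mul_of_nonneg_left (hval ▸ hmono) (Real.sqrt_nonneg A)
      _ ≤ x * (Real.sqrt Real.pi * Real.sqrt A) * (1 + Real.sqrt L) := by
          have hA' : 0 ≤ Real.sqrt A := Real.sqrt_nonneg A
          have hL' : 0 ≤ Real.sqrt L := Real.sqrt_nonneg L
          nlinarith [mul_nonneg (mul_nonneg hx.le hA') hL',
            mul_nonneg hx.le hA', mul_nonneg (mul_nonneg hx.le hA') hL]
end
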